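/- arXiv:1804.03438 — 2 statements merged into one kernel-verified Lean document; each statement's English description precedes it below -/
import Mathlib

section
/- Let H be a complex separable infinite-dimensional Hilbert space, T a bounded bijective linear operator on H, and f₀ ∈ H. Then (Tⁿf₀)_{n∈ℤ} is a Riesz basis for H if and only if (T, f₀) is similar to (M_𝕋, 1_𝕋), where M_𝕋 is multiplication by the free variable z on L²(𝕋) and 1_𝕋 is the constant function 1. -/
open MeasureTheory AddCircle
noncomputable section

instance : Fact ((0:ℝ) < 1) := ⟨one_pos⟩

section MulCLM

variable {α : Type*} [MeasurableSpace α] {μ : Measure α}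

theorem memℒp_mul_of_ae_bound (φ : α → ℂ) (hm : AEStronglyMeasurable φ μ)
    (hb : ∀ᵐ x ∂μ, ‖φ x‖ ≤ 1) (f : Lp ℂ 2 μ) : MemLp (fun x => φ x * f x) 2 μ := by
  refine MemLp.of_le (Lp.memLp f) (hm.mul (Lp.aestronglyMeasurable f)) ?_
  filter_upwards [hb] with x hx
  calc ‖φ x * f x‖ = ‖φ x‖ * ‖f x‖ := norm_mul _ _
  _ ≤ 1 * ‖f x‖ := by gcongr
  _ = ‖f x‖ := one_mul _

/-- Multiplication by a measurable function bounded by `1` a.e., as a bounded operator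
on `L²(μ)`. -/
def mulCLM (φ : α → ℂ) (hm : AEStronglyMeasurable φ μ) (hb : ∀ᵐ x ∂μ, ‖φ x‖ ≤ 1) :
    Lp ℂ 2 μ →L[ℂ] Lp ℂ 2 μ := by
  refine LinearMap.mkContinuous
    { toFun := fun f => (memℒp_mul_of_ae_bound φ hm hb f).toLp (fun x => φ x * f x)
      map_add' := ?_
      map_smul' := ?_ } 1 ?_
  · intro f g
    refine Lp.ext ?_
    filter_upwards [MemLp.coeFn_toLp (memℒp_mul_of_ae_bound φ hm hb (f + g)),
      MemLp.coeFn_toLp (memℒp_mul_of_ae_bound φ hm hb f),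
      MemLp.coeFn_toLp (memℒp_mul_of_ae_bound φ hm hb g),
      Lp.coeFn_add f g,
      Lp.coeFn_add ((memℒp_mul_of_ae_bound φ hm hb f).toLp _)
        ((memℒp_mul_of_ae_bound φ hm hb g).toLp _)] with x h1 h2 h3 h4 h5
    rw [h1, h5]
    simp only [Pi.add_apply, h2, h3, h4]
    ring
  · intro c f
    refine Lp.ext ?_
    filter_upwards [MemLp.coeFn_toLp (memℒp_mul_of_ae_bound φ hm hb (c • f)),
      MemLp.coeFn_toLp (memℒp_mul_of_ae_bound φ hm hb f), Lp.coeFn_smul c f,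
      Lp.coeFn_smul c ((memℒp_mul_of_ae_bound φ hm hb f).toLp _)] with x h1 h2 h3 h4
    simp only [RingHom.id_apply]
    rw [h1, h4]
    simp only [Pi.smul_apply, h2, h3, smul_eq_mul]
    ring
  · intro f
    simp only [LinearMap.coe_mk, AddHom.coe_mk, one_mul]
    rw [Lp.norm_toLp, Lp.norm_def]
    refine ENNReal.toReal_mono (Lp.eLpNorm_ne_top f) ?_
    refine eLpNorm_mono_ae ?_
    filter_upwards [hb] with x hx
    calc ‖φ x * f x‖ = ‖φ x‖ * ‖f x‖ := norm_mul _ _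
    _ ≤ 1 * ‖f x‖ := by gcongr
    _ = ‖f x‖ := one_mul _

end MulCLM

lemma norm_fourier_apply (n : ℤ) (x : UnitAddCircle) : ‖fourier n x‖ = 1 := by
  rw [fourier_apply]
  exact Circle.norm_coe _

/-- `L²(σ)` for a subset `σ` of the circle: the `L²`-space of the normalized arc-length
(Haar) measure restricted to `σ`. -/
abbrev L2c (σ : Set UnitAddCircle) :=
  Lp ℂ 2 ((haarAddCircle : Measure UnitAddCircle).restrict σ)

/-- The unitary operator `M_σ` of multiplication by the free variable `z` on `L²(σ)`. -/
def Msigma (σ : Set UnitAddCircle) : L2c σ →L[ℂ] L2c σ :=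
  mulCLM (⇑(fourier 1)) ((map_continuous (fourier 1)).aestronglyMeasurable)
    (Filter.Eventually.of_forall fun x => le_of_eq (norm_fourier_apply 1 x))

/-- The constant function `1` in `L²(σ)`. -/
def oneSigma (σ : Set UnitAddCircle) : L2c σ := (memLp_const (1 : ℂ)).toLp _

/-- The full `L²` space of the circle (normalized arc-length measure). -/
abbrev L2T := Lp ℂ 2 (haarAddCircle : Measure UnitAddCircle)

/-- The unitary operator `M_𝕋` of multiplication by the free variable `z` on `L²(𝕋)`. -/
def MT : L2T →L[ℂ] L2T :=
  mulCLM (⇑(fourier 1)) ((map_continuous (fourier 1)).aestronglyMeasurable)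
    (Filter.Eventually.of_forall fun x => le_of_eq (norm_fourier_apply 1 x))

/-- The constant function `1` in `L²(𝕋)`. -/
def oneT : L2T := (memLp_const (1 : ℂ)).toLp _

/-- `(F n)` is a Riesz basis: the image of an orthonormal basis under a bounded
bijective operator. -/
def IsRieszBasis {I H : Type*} [NormedAddCommGroup H] [InnerProductSpace ℂ H] (F : I → H) : Prop :=
  ∃ (e : HilbertBasis I ℂ H) (V : H ≃L[ℂ] H), ∀ n, F n = V (e n)



section Aux

abbrev fB : HilbertBasis ℤ ℂ L2T := @fourierBasis 1 ⟨one_pos⟩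

lemma MT_apply (f : L2T) :
    MT f = (memℒp_mul_of_ae_bound (⇑(fourier 1))
      ((map_continuous (fourier 1)).aestronglyMeasurable)
      (Filter.Eventually.of_forall fun x => le_of_eq (norm_fourier_apply 1 x)) f).toLp
      (fun x => fourier 1 x * f x) := rfl

lemma MT_fourierLp (n : ℤ) : MT (fourierLp 2 n) = fourierLp 2 (n + 1) := by
  rw [MT_apply]
  refine Lp.ext ?_
  filter_upwards [MemLp.coeFn_toLp (memℒp_mul_of_ae_bound (⇑(fourier 1))
      ((map_continuous (fourier 1)).aestronglyMeasurable)
      (Filter.Eventually.of_forall fun x => le_of_eq (norm_fourier_apply 1 x)) (fourierLp 2 n)),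
    coeFn_fourierLp 2 n, coeFn_fourierLp 2 (n + 1)] with x h1 h2 h3
  rw [h1, h3, h2, ← fourier_add]
  norm_num [add_comm]

lemma oneT_eq : oneT = fourierLp 2 0 := by
  unfold oneT
  refine Lp.ext ?_
  filter_upwards [MemLp.coeFn_toLp (memLp_const (1 : ℂ)), coeFn_fourierLp 2 (0 : ℤ)] with x h1 h2
  rw [h1, h2, fourier_zero]

lemma fB_apply (n : ℤ) : (fB n : L2T) = fourierLp 2 n := by rw [coe_fourierBasis]

variable {H : Type*} [NormedAddCommGroup H] [InnerProductSpace ℂ H] [CompleteSpace H]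

omit [CompleteSpace H] in
lemma unitary_fB (e : HilbertBasis ℤ ℂ H) (n : ℤ) :
    (fB.repr.trans e.repr.symm) (fB n) = e n := by
  rw [LinearIsometryEquiv.trans_apply, HilbertBasis.repr_self]
  exact e.repr_symm_single n

lemma exists_hilbertBasis_int [TopologicalSpace.SeparableSpace H]
    (hdim : ¬ FiniteDimensional ℂ H) : Nonempty (HilbertBasis ℤ ℂ H) := by
  obtain ⟨w, b, hb⟩ := exists_hilbertBasis ℂ H
  have horth : Orthonormal ℂ ((↑) : w → H) := hb ▸ b.orthonormal
  -- `w` is countable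
  have hcw : w.Countable := by
    have hd : w.PairwiseDisjoint (fun x => Metric.ball x (1/2)) := by
      intro x hx y hy hxy
      refine Metric.ball_disjoint_ball ?_
      have h2 : ‖x - y‖ ^ 2 = 2 := by
        have hx1 : ‖x‖ = 1 := horth.1 ⟨x, hx⟩
        have hy1 : ‖y‖ = 1 := horth.1 ⟨y, hy⟩
        have hxy0 : (inner ℂ x y : ℂ) = 0 :=
          horth.2 (i := ⟨x, hx⟩) (j := ⟨y, hy⟩) (by
            simp only [ne_eq, Subtype.mk.injEq]; exact hxy)
        rw [@norm_sub_sq ℂ, hx1, hy1, hxy0]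
        norm_num
      have h1 : (1:ℝ) ≤ ‖x - y‖ := by nlinarith [norm_nonneg (x - y)]
      rw [dist_eq_norm]
      linarith
    exact hd.countable_of_isOpen (fun i _ => Metric.isOpen_ball)
      (fun i _ => Metric.nonempty_ball.2 (by norm_num))
  -- `w` is infinite
  have hiw : w.Infinite := by
    intro hfin
    refine hdim ?_
    have hsp := b.dense_span
    rw [hb, Subtype.range_coe] at hsp
    have hfd : FiniteDimensional ℂ (Submodule.span ℂ w) :=
      FiniteDimensional.span_of_finite ℂ hfin
    have hclosed : IsClosed ((Submodule.span ℂ w : Submodule ℂ H) : Set H) :=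
      Submodule.closed_of_finiteDimensional _
    have htop : Submodule.span ℂ w = (⊤ : Submodule ℂ H) := by
      rw [← hsp, hclosed.submodule_topologicalClosure_eq]
    exact Module.Finite.equiv (LinearEquiv.ofTop _ htop)
  haveI : Countable w := hcw.to_subtype
  haveI : Infinite w := hiw.to_subtype
  obtain ⟨dw⟩ := nonempty_denumerable w
  let eqv : ℤ ≃ w := (Denumerable.eqv ℤ).trans (Denumerable.eqv w).symm
  have horth2 : Orthonormal ℂ (((↑) : w → H) ∘ eqv) := horth.comp eqv eqv.injective
  refine ⟨HilbertBasis.mk horth2 ?_⟩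
  have hsp := b.dense_span
  rw [hb, Subtype.range_coe] at hsp
  have hr : Set.range (((↑) : w → H) ∘ eqv) = w := by
    rw [Set.range_comp, eqv.range_eq_univ, Set.image_univ, Subtype.range_coe]
  rw [hr, hsp]

end Aux


section CLEGroup

variable {H : Type*} [NormedAddCommGroup H] [InnerProductSpace ℂ H]

lemma cle_mul_apply (f g : H ≃L[ℂ] H) (x : H) : (f * g) x = f (g x) := rfl
lemma cle_one_apply (x : H) : (1 : H ≃L[ℂ] H) x = x := rfl
lemma cle_inv_apply (f : H ≃L[ℂ] H) (x : H) : (f⁻¹) x = f.symm x := rfl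

end CLEGroup

/-- For a bounded bijective operator `T` on `H` and `f₀ ∈ H`, the bi-infinite orbit
`(Tⁿf₀)_{n∈ℤ}` is a Riesz basis for `H` iff `(T, f₀)` is similar to `(M_𝕋, 1_𝕋)`. -/
theorem biinfinite_orbit_riesz_basis_iff_similar_to_MT
    {H : Type*} [NormedAddCommGroup H] [InnerProductSpace ℂ H] [CompleteSpace H]
    [TopologicalSpace.SeparableSpace H] (hdim : ¬ FiniteDimensional ℂ H)
    (T : H ≃L[ℂ] H) (f₀ : H) :
    (IsRieszBasis fun n : ℤ => (T ^ n) f₀) ↔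
      ∃ V : L2T ≃L[ℂ] H, (∀ g : L2T, T (V g) = V (MT g)) ∧ f₀ = V oneT := by
  constructor
  · rintro ⟨e, Vr, hVr⟩
    let U : L2T ≃ₗᵢ[ℂ] H := fB.repr.trans e.repr.symm
    let W : L2T ≃L[ℂ] H := U.toContinuousLinearEquiv.trans Vr
    have hW : ∀ n : ℤ, W (fourierLp 2 n) = (T ^ n) f₀ := by
      intro n
      have h1 : U (fourierLp 2 n) = e n := by
        rw [← fB_apply]; exact unitary_fB e n
      have : W (fourierLp 2 n) = Vr (U (fourierLp 2 n)) := rfl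
      rw [this, h1, ← hVr n]
    refine ⟨W, ?_, ?_⟩
    · have key : (T : H →L[ℂ] H).comp (W : L2T →L[ℂ] H)
          = (W : L2T →L[ℂ] H).comp MT := by
        apply ContinuousLinearMap.ext_on
          (Submodule.dense_iff_topologicalClosure_eq_top.2
            (span_fourierLp_closure_eq_top (p := 2) (by norm_num)))
        rintro _ ⟨n, rfl⟩
        simp only [ContinuousLinearMap.coe_comp', Function.comp_apply,
          ContinuousLinearEquiv.coe_coe]
        rw [MT_fourierLp, hW, hW, ← cle_mul_apply, ← zpow_one_add, add_comm]
      intro g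
      have := ContinuousLinearMap.ext_iff.1 key g
      simpa using this
    · have := hW 0
      rw [zpow_zero, cle_one_apply] at this
      rw [oneT_eq, this]
  · rintro ⟨V, hV, hf⟩
    obtain ⟨e⟩ := exists_hilbertBasis_int (H := H) hdim
    let U : L2T ≃ₗᵢ[ℂ] H := fB.repr.trans e.repr.symm
    let E : L2T ≃L[ℂ] L2T := V.trans (T.trans V.symm)
    have hVE : ∀ g : L2T, V (E g) = T (V g) := fun g => by
      show V (V.symm (T (V g))) = T (V g)
      exact V.apply_symm_apply _
    have hE : ∀ g : L2T, E g = MT g := fun g => by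
      show V.symm (T (V g)) = MT g
      rw [hV g]; exact V.symm_apply_apply _
    have hstep : ∀ m : ℤ, E (fourierLp 2 m) = fourierLp 2 (m + 1) := fun m => by
      rw [hE, MT_fourierLp]
    have hstep' : ∀ m : ℤ, E.symm (fourierLp 2 (m + 1)) = fourierLp 2 m := fun m => by
      rw [← hstep m]; exact E.symm_apply_apply _
    have hEn : ∀ n : ℤ, (E ^ n) oneT = fourierLp 2 n := by
      intro n
      induction n using Int.induction_on with
      | zero => rw [zpow_zero, cle_one_apply, oneT_eq]
      | succ k ih =>
        have : ((k : ℤ) + 1) = 1 + k := by ring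
        rw [this, zpow_one_add, cle_mul_apply, ih, hstep, add_comm]
      | pred k ih =>
        have h2 : E ((E ^ (-(k : ℤ) - 1)) oneT) = (E ^ (-(k : ℤ))) oneT := by
          rw [← cle_mul_apply, ← zpow_one_add]
          have h3 : (1 + (-(k : ℤ) - 1)) = -(k : ℤ) := by ring
          rw [h3]
        have h1 : (E ^ (-(k : ℤ) - 1)) oneT = E.symm ((E ^ (-(k : ℤ))) oneT) := by
          rw [← h2, ContinuousLinearEquiv.symm_apply_apply]
        have h4 := hstep' (-(k : ℤ) - 1)
        have h5 : (-(k : ℤ) - 1 + 1) = -(k : ℤ) := by omega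
        rw [h5] at h4
        rw [h1, ih, h4]
    have key : ∀ n : ℤ, ∀ g : L2T, (T ^ n) (V g) = V ((E ^ n) g) := by
      intro n
      induction n using Int.induction_on with
      | zero => intro g; rw [zpow_zero, zpow_zero, cle_one_apply, cle_one_apply]
      | succ k ih =>
        intro g
        have h2 : ((k : ℤ) + 1) = 1 + k := by ring
        rw [h2, zpow_one_add, zpow_one_add, cle_mul_apply, cle_mul_apply, ih, hVE]
      | pred k ih =>
        intro g
        have hinv : ∀ h : L2T, (T⁻¹) (V h) = V ((E⁻¹) h) := by
          intro h
          rw [cle_inv_apply, cle_inv_apply]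
          have := hVE (E.symm h)
          rw [ContinuousLinearEquiv.apply_symm_apply] at this
          rw [this, ContinuousLinearEquiv.symm_apply_apply]
        have h2 : (-(k : ℤ) - 1) = -1 + (-(k : ℤ)) := by ring
        rw [h2, zpow_add, zpow_add, zpow_neg_one, zpow_neg_one, cle_mul_apply,
          cle_mul_apply]
        rw [ih, hinv]
    have hTn : ∀ n : ℤ, (T ^ n) f₀ = V (fourierLp 2 n) := by
      intro n
      rw [hf, key n oneT, hEn n]
    let V' : H ≃L[ℂ] H := U.toContinuousLinearEquiv.symm.trans V
    refine ⟨e, V', fun n => ?_⟩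
    have hU : U (fB n) = e n := unitary_fB e n
    have hU' : U.symm (e n) = fB n := by rw [← hU, LinearIsometryEquiv.symm_apply_apply]
    have : V' (e n) = V (U.symm (e n)) := rfl
    rw [this, hU', fB_apply, ← hTn]
end
end

section
/- Let σ₁ and σ₂ be Borel subsets of the unit circle 𝕋. If there exists a bounded bijective linear operator V : L²(σ₁) → L²(σ₂) with M_{σ₂} = V M_{σ₁} V⁻¹, then the symmetric difference σ₁ Δ σ₂ has arc-length measure zero. -/
open MeasureTheory AddCircle
noncomputable section

section Aux

variable {α : Type*} [MeasurableSpace α] {μ : Measure α}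

lemma mulCLM_coeFn (φ : α → ℂ) (hm : AEStronglyMeasurable φ μ)
    (hb : ∀ᵐ x ∂μ, ‖φ x‖ ≤ 1) (f : Lp ℂ 2 μ) :
    mulCLM φ hm hb f =ᵐ[μ] fun x => φ x * f x := by
  simp only [mulCLM, LinearMap.mkContinuous_apply, LinearMap.coe_mk, AddHom.coe_mk]
  exact MemLp.coeFn_toLp _

lemma memℒp_mul_bound (φ : α → ℂ) (hm : AEStronglyMeasurable φ μ) {C : ℝ}
    (hb : ∀ x, ‖φ x‖ ≤ C) (f : Lp ℂ 2 μ) : MemLp (fun x => φ x * f x) 2 μ := by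
  refine MemLp.of_le_mul (c := C) (Lp.memLp f) (hm.mul (Lp.aestronglyMeasurable f))
    (Filter.Eventually.of_forall fun x => ?_)
  rw [norm_mul]
  exact mul_le_mul_of_nonneg_right (hb x) (norm_nonneg _)

lemma toLp_mul_sub (φ ψ : α → ℂ) (f : Lp ℂ 2 μ)
    (h1 : MemLp (fun x => φ x * f x) 2 μ) (h2 : MemLp (fun x => ψ x * f x) 2 μ)
    (h3 : MemLp (fun x => (φ x - ψ x) * f x) 2 μ) :
    h1.toLp _ - h2.toLp _ = h3.toLp _ := by
  refine Lp.ext ?_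
  filter_upwards [Lp.coeFn_sub (h1.toLp _) (h2.toLp _), h1.coeFn_toLp, h2.coeFn_toLp,
    h3.coeFn_toLp] with x e1 e2 e3 e4
  rw [e1, Pi.sub_apply, e2, e3, e4]
  ring

lemma norm_toLp_mul_le (φ : α → ℂ) {C : ℝ} (hC : 0 ≤ C) (hb : ∀ x, ‖φ x‖ ≤ C)
    (f : Lp ℂ 2 μ) (h : MemLp (fun x => φ x * f x) 2 μ) :
    ‖h.toLp _‖ ≤ C * ‖f‖ := by
  rw [Lp.norm_toLp, Lp.norm_def]
  have h1 : eLpNorm (fun x => φ x * f x) 2 μ ≤ eLpNorm (fun x => (C : ℂ) * f x) 2 μ := by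
    refine eLpNorm_mono fun x => ?_
    rw [norm_mul, norm_mul, Complex.norm_real, Real.norm_of_nonneg hC]
    exact mul_le_mul_of_nonneg_right (hb x) (norm_nonneg _)
  have h2 : eLpNorm (fun x => (C : ℂ) * f x) 2 μ = (‖(C : ℂ)‖₊ : ENNReal) * eLpNorm f 2 μ := by
    exact (by have := eLpNorm_const_smul (C : ℂ) (⇑f) 2 μ; rw [enorm_eq_nnnorm] at this; exact this)
  calc (eLpNorm (fun x => φ x * f x) 2 μ).toReal
      ≤ ((‖(C : ℂ)‖₊ : ENNReal) * eLpNorm f 2 μ).toReal := by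
        refine ENNReal.toReal_mono ?_ (h2 ▸ h1)
        exact ENNReal.mul_ne_top ENNReal.coe_ne_top (Lp.eLpNorm_ne_top f)
    _ = C * ‖f‖ := by
        rw [ENNReal.toReal_mul, ENNReal.coe_toReal, Lp.norm_def, coe_nnnorm,
          Complex.norm_real, Real.norm_of_nonneg hC]

end Aux
section Fourier

/-- Multiplication by `fourier n` on `L²(σ)`. -/
def mulF (σ : Set UnitAddCircle) (n : ℤ) : L2c σ →L[ℂ] L2c σ :=
  mulCLM (⇑(fourier n)) ((map_continuous (fourier n)).aestronglyMeasurable)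
    (Filter.Eventually.of_forall fun x => le_of_eq (norm_fourier_apply n x))

lemma mulF_coeFn (σ : Set UnitAddCircle) (n : ℤ) (f : L2c σ) :
    mulF σ n f =ᵐ[(haarAddCircle : Measure UnitAddCircle).restrict σ]
      fun x => fourier n x * f x :=
  mulCLM_coeFn _ _ _ f

lemma mulF_comp (σ : Set UnitAddCircle) (m n : ℤ) (f : L2c σ) :
    mulF σ m (mulF σ n f) = mulF σ (m + n) f := by
  refine Lp.ext ?_
  filter_upwards [mulF_coeFn σ m (mulF σ n f), mulF_coeFn σ n f, mulF_coeFn σ (m + n) f]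
    with x e1 e2 e3
  rw [e1, e2, e3, fourier_add]
  ring

lemma mulF_zero (σ : Set UnitAddCircle) (f : L2c σ) : mulF σ 0 f = f := by
  refine Lp.ext ?_
  filter_upwards [mulF_coeFn σ 0 f] with x e1
  rw [e1, fourier_zero, one_mul]

lemma Msigma_eq_mulF (σ : Set UnitAddCircle) : Msigma σ = mulF σ 1 := rfl

lemma intertwine_mulF (σ₁ σ₂ : Set UnitAddCircle) (V : L2c σ₁ ≃L[ℂ] L2c σ₂)
    (hV : ∀ f : L2c σ₁, Msigma σ₂ (V f) = V (Msigma σ₁ f)) :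
    ∀ (n : ℤ) (f : L2c σ₁), V (mulF σ₁ n f) = mulF σ₂ n (V f) := by
  intro n
  induction n using Int.induction_on with
  | zero => intro f; rw [mulF_zero, mulF_zero]
  | succ n ih =>
    intro f
    have h1 : mulF σ₁ ((n : ℤ) + 1) f = Msigma σ₁ (mulF σ₁ n f) := by
      rw [Msigma_eq_mulF, mulF_comp, add_comm]
    rw [h1, ← hV, ih, Msigma_eq_mulF, mulF_comp, add_comm]
  | pred n ih =>
    intro f
    have h1 : mulF σ₁ (-(n : ℤ)) f = Msigma σ₁ (mulF σ₁ (-(n : ℤ) - 1) f) := by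
      rw [Msigma_eq_mulF, mulF_comp]
      norm_num
    have h2 : Msigma σ₂ (V (mulF σ₁ (-(n : ℤ) - 1) f)) = Msigma σ₂ (mulF σ₂ (-(n : ℤ) - 1) (V f)) := by
      rw [hV, ← h1, ih, Msigma_eq_mulF, mulF_comp]
      norm_num
    have h3 := congrArg (mulF σ₂ (-1)) h2
    rw [Msigma_eq_mulF, mulF_comp, mulF_comp] at h3
    norm_num at h3
    rw [mulF_zero, mulF_zero] at h3
    exact h3

end Fourier
section Cmul

/-- Multiplication by a continuous function on `L²(σ)`. -/
def cmul (σ : Set UnitAddCircle) (φ : C(UnitAddCircle, ℂ)) (f : L2c σ) : L2c σ :=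
  (memℒp_mul_bound ⇑φ φ.continuous.aestronglyMeasurable φ.norm_coe_le_norm f).toLp _

lemma cmul_coeFn (σ : Set UnitAddCircle) (φ : C(UnitAddCircle, ℂ)) (f : L2c σ) :
    cmul σ φ f =ᵐ[(haarAddCircle : Measure UnitAddCircle).restrict σ] fun x => φ x * f x :=
  MemLp.coeFn_toLp _

lemma cmul_sub (σ : Set UnitAddCircle) (φ ψ : C(UnitAddCircle, ℂ)) (f : L2c σ) :
    cmul σ (φ - ψ) f = cmul σ φ f - cmul σ ψ f := by
  refine Lp.ext ?_
  filter_upwards [cmul_coeFn σ (φ - ψ) f, cmul_coeFn σ φ f, cmul_coeFn σ ψ f,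
    Lp.coeFn_sub (cmul σ φ f) (cmul σ ψ f)] with x e1 e2 e3 e4
  rw [e1, e4, Pi.sub_apply, e2, e3]
  simp only [ContinuousMap.sub_apply]
  ring

lemma cmul_add (σ : Set UnitAddCircle) (φ ψ : C(UnitAddCircle, ℂ)) (f : L2c σ) :
    cmul σ (φ + ψ) f = cmul σ φ f + cmul σ ψ f := by
  refine Lp.ext ?_
  filter_upwards [cmul_coeFn σ (φ + ψ) f, cmul_coeFn σ φ f, cmul_coeFn σ ψ f,
    Lp.coeFn_add (cmul σ φ f) (cmul σ ψ f)] with x e1 e2 e3 e4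
  rw [e1, e4, Pi.add_apply, e2, e3]
  simp only [ContinuousMap.add_apply]
  ring

lemma cmul_smul (σ : Set UnitAddCircle) (c : ℂ) (φ : C(UnitAddCircle, ℂ)) (f : L2c σ) :
    cmul σ (c • φ) f = c • cmul σ φ f := by
  refine Lp.ext ?_
  filter_upwards [cmul_coeFn σ (c • φ) f, cmul_coeFn σ φ f,
    Lp.coeFn_smul c (cmul σ φ f)] with x e1 e2 e3
  rw [e1, e3, Pi.smul_apply, e2]
  simp only [ContinuousMap.smul_apply, smul_eq_mul]
  ring

lemma cmul_zero (σ : Set UnitAddCircle) (f : L2c σ) : cmul σ 0 f = 0 := by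
  have := cmul_smul σ 0 0 f
  rwa [zero_smul, zero_smul] at this

lemma norm_cmul_le (σ : Set UnitAddCircle) (φ : C(UnitAddCircle, ℂ)) (f : L2c σ) :
    ‖cmul σ φ f‖ ≤ ‖φ‖ * ‖f‖ :=
  norm_toLp_mul_le ⇑φ (norm_nonneg φ) φ.norm_coe_le_norm f _

lemma continuous_cmul (σ : Set UnitAddCircle) (f : L2c σ) :
    Continuous fun φ : C(UnitAddCircle, ℂ) => cmul σ φ f := by
  refine (LipschitzWith.of_dist_le_mul (K := ‖f‖₊) fun φ ψ => ?_).continuous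
  rw [dist_eq_norm, dist_eq_norm, ← cmul_sub]
  calc ‖cmul σ (φ - ψ) f‖ ≤ ‖φ - ψ‖ * ‖f‖ := norm_cmul_le σ (φ - ψ) f
  _ = (‖f‖₊ : ℝ) * ‖φ - ψ‖ := by rw [coe_nnnorm, mul_comm]

lemma cmul_fourier (σ : Set UnitAddCircle) (n : ℤ) (f : L2c σ) :
    cmul σ (fourier n) f = mulF σ n f := by
  refine Lp.ext ?_
  filter_upwards [cmul_coeFn σ (fourier n) f, mulF_coeFn σ n f] with x e1 e2
  rw [e1, e2]

lemma intertwine_cmul (σ₁ σ₂ : Set UnitAddCircle) (V : L2c σ₁ ≃L[ℂ] L2c σ₂)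
    (hV : ∀ f : L2c σ₁, Msigma σ₂ (V f) = V (Msigma σ₁ f)) (f : L2c σ₁) :
    ∀ φ : C(UnitAddCircle, ℂ), V (cmul σ₁ φ f) = cmul σ₂ φ (V f) := by
  set S : Set C(UnitAddCircle, ℂ) := {φ | V (cmul σ₁ φ f) = cmul σ₂ φ (V f)} with hS
  have hclosed : IsClosed S :=
    isClosed_eq (V.continuous.comp (continuous_cmul σ₁ f)) (continuous_cmul σ₂ (V f))
  have hspan : (Submodule.span ℂ (Set.range (@fourier 1)) : Set C(UnitAddCircle, ℂ)) ⊆ S := by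
    intro φ hφ
    induction hφ using Submodule.span_induction with
    | mem ψ hψ =>
      obtain ⟨n, rfl⟩ := hψ
      show V (cmul σ₁ (fourier n) f) = cmul σ₂ (fourier n) (V f)
      rw [cmul_fourier, cmul_fourier, intertwine_mulF σ₁ σ₂ V hV]
    | zero =>
      show V (cmul σ₁ 0 f) = cmul σ₂ 0 (V f)
      rw [cmul_zero, cmul_zero, map_zero]
    | add ψ χ _ _ ih1 ih2 =>
      show V (cmul σ₁ (ψ + χ) f) = cmul σ₂ (ψ + χ) (V f)
      rw [cmul_add, cmul_add, map_add, ih1, ih2]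
    | smul c ψ _ ih =>
      show V (cmul σ₁ (c • ψ) f) = cmul σ₂ (c • ψ) (V f)
      rw [cmul_smul, cmul_smul, _root_.map_smul]
      exact congrArg (c • ·) ih
  intro φ
  have htop : φ ∈ closure (Submodule.span ℂ (Set.range (@fourier 1)) : Set C(UnitAddCircle, ℂ)) := by
    rw [← Submodule.topologicalClosure_coe, span_fourier_closure_eq_top]
    trivial
  exact closure_minimal hspan hclosed htop

end Cmul
section Dominated

open Filter

variable {α : Type*} [MeasurableSpace α] {μ : Measure α}

lemma tendsto_eLpNorm_mul (g : Lp ℂ 2 μ) (ψ : ℕ → α → ℂ) (χ : α → ℂ)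
    (hψm : ∀ k, AEStronglyMeasurable (ψ k) μ) (hχm : AEStronglyMeasurable χ μ)
    (hψb : ∀ k x, ‖ψ k x‖ ≤ 1) (hχb : ∀ x, ‖χ x‖ ≤ 1)
    (hae : ∀ᵐ x ∂μ, Tendsto (fun k => ψ k x) atTop (nhds (χ x))) :
    Tendsto (fun k => eLpNorm (fun x => (ψ k x - χ x) * g x) 2 μ) atTop (nhds 0) := by
  set F : ℕ → α → ENNReal := fun k x => (‖(ψ k x - χ x) * g x‖₊ : ENNReal) ^ (2:ℝ) with hF
  have hmeas : ∀ k, AEMeasurable (F k) μ := fun k =>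
    (ENNReal.continuous_rpow_const.measurable).comp_aemeasurable
      ((((hψm k).sub hχm).mul (Lp.aestronglyMeasurable g)).enorm)
  have hbound : ∀ k, F k ≤ᵐ[μ] fun x => 4 * (‖g x‖₊ : ENNReal) ^ (2:ℝ) := by
    intro k
    refine Filter.Eventually.of_forall fun x => ?_
    have hn : (‖(ψ k x - χ x) * g x‖₊ : ENNReal) ≤ 2 * (‖g x‖₊ : ENNReal) := by
      have hr : ‖(ψ k x - χ x) * g x‖ ≤ 2 * ‖g x‖ := by
        rw [norm_mul]
        refine mul_le_mul_of_nonneg_right ?_ (norm_nonneg _)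
        calc ‖ψ k x - χ x‖ ≤ ‖ψ k x‖ + ‖χ x‖ := norm_sub_le _ _
        _ ≤ 1 + 1 := add_le_add (hψb k x) (hχb x)
        _ = 2 := by norm_num
      have hnn : ‖(ψ k x - χ x) * g x‖₊ ≤ 2 * ‖g x‖₊ := by
        rw [← NNReal.coe_le_coe]
        push_cast
        simpa using hr
      exact_mod_cast hnn
    calc F k x ≤ (2 * (‖g x‖₊ : ENNReal)) ^ (2:ℝ) :=
          ENNReal.rpow_le_rpow hn (by norm_num)
    _ = 4 * (‖g x‖₊ : ENNReal) ^ (2:ℝ) := by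
        rw [ENNReal.mul_rpow_of_nonneg _ _ (by norm_num : (0:ℝ) ≤ 2)]
        congr 1
        rw [show ((2:ℝ)) = ((2:ℕ):ℝ) by norm_num, ENNReal.rpow_natCast]
        norm_num
  have hfin : ∫⁻ x, 4 * (‖g x‖₊ : ENNReal) ^ (2:ℝ) ∂μ ≠ ⊤ := by
    rw [lintegral_const_mul' _ _ (by norm_num : (4:ENNReal) ≠ ⊤)]
    refine ENNReal.mul_ne_top (by norm_num) ?_
    have hg := Lp.eLpNorm_ne_top g
    rw [eLpNorm_eq_lintegral_rpow_enorm_toReal two_ne_zero (by norm_num : (2:ENNReal) ≠ ⊤)] at hg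
    simp only [ENNReal.toReal_ofNat, enorm_eq_nnnorm] at hg
    intro hcon
    rw [hcon] at hg
    exact hg (ENNReal.top_rpow_of_pos (by norm_num))
  have hlim : ∀ᵐ x ∂μ, Tendsto (fun k => F k x) atTop (nhds 0) := by
    filter_upwards [hae] with x hx
    have h0 : Tendsto (fun k => (ψ k x - χ x) * g x) atTop (nhds 0) := by
      have h1 := (hx.sub_const (χ x)).mul_const (g x)
      simpa using h1
    have h1 : Tendsto (fun k => (‖(ψ k x - χ x) * g x‖₊ : ENNReal)) atTop (nhds 0) := by
      have := ENNReal.tendsto_coe.mpr h0.nnnorm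
      simpa using this
    have h2 := (ENNReal.continuous_rpow_const (y := (2:ℝ))).tendsto 0 |>.comp h1
    simpa [hF, ENNReal.zero_rpow_of_pos (by norm_num : (0:ℝ) < 2), Function.comp_def] using h2
  have key := tendsto_lintegral_of_dominated_convergence' _ hmeas hbound hfin
    (by simpa using hlim)
  rw [lintegral_zero] at key
  have heq : ∀ k, eLpNorm (fun x => (ψ k x - χ x) * g x) 2 μ = (∫⁻ x, F k x ∂μ) ^ (1/(2:ℝ)) := by
    intro k
    rw [eLpNorm_eq_lintegral_rpow_enorm_toReal two_ne_zero (by norm_num : (2:ENNReal) ≠ ⊤)]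
    simp [hF, enorm_eq_nnnorm]
  simp_rw [heq]
  have h3 := (ENNReal.continuous_rpow_const (y := 1/(2:ℝ))).tendsto 0 |>.comp key
  simpa [ENNReal.zero_rpow_of_pos (by norm_num : (0:ℝ) < 1/2), Function.comp_def] using h3

end Dominated
section Clip

lemma clip_abs_le (s t : ℝ) (ht0 : 0 ≤ t) (ht1 : t ≤ 1) :
    |max 0 (min 1 s) - t| ≤ |s - t| := by
  have h1 : max 0 (min 1 t) = t := by rw [min_eq_right ht1, max_eq_right ht0]
  conv_lhs => rw [← h1]
  rw [max_comm 0 (min 1 s), max_comm 0 (min 1 t)]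
  refine (abs_max_sub_max_le_abs _ _ _).trans ?_
  rw [min_comm 1 s, min_comm 1 t]
  refine (abs_min_sub_min_le_max _ _ _ _).trans ?_
  simp

lemma clip_norm_le (z w : ℂ) (t : ℝ) (ht0 : 0 ≤ t) (ht1 : t ≤ 1) (hw : w = (t : ℂ)) :
    ‖((max 0 (min 1 z.re) : ℝ) : ℂ) - w‖ ≤ ‖z - w‖ := by
  subst hw
  rw [← Complex.ofReal_sub, Complex.norm_real, Real.norm_eq_abs]
  refine (clip_abs_le z.re t ht0 ht1).trans ?_
  have h2 : z.re - t = (z - (t : ℂ)).re := by simp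
  rw [h2]
  exact Complex.abs_re_le_norm _

end Clip

section Helper

open Filter

lemma tendsto_cmul_toLp (σ : Set UnitAddCircle) (g : L2c σ) (ψ : ℕ → C(UnitAddCircle, ℂ))
    (χ : UnitAddCircle → ℂ)
    (hχm : AEStronglyMeasurable χ ((haarAddCircle : Measure UnitAddCircle).restrict σ))
    (hψb : ∀ k x, ‖ψ k x‖ ≤ 1) (hχb : ∀ x, ‖χ x‖ ≤ 1)
    (hae : ∀ᵐ x ∂(haarAddCircle : Measure UnitAddCircle),
      Tendsto (fun k => ψ k x) atTop (nhds (χ x)))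
    (hmem : MemLp (fun x => χ x * g x) 2 ((haarAddCircle : Measure UnitAddCircle).restrict σ)) :
    Tendsto (fun k => cmul σ (ψ k) g) atTop (nhds (hmem.toLp _)) := by
  have hdiffmem : ∀ k, MemLp (fun x => (ψ k x - χ x) * g x) 2
      ((haarAddCircle : Measure UnitAddCircle).restrict σ) := fun k =>
    memℒp_mul_bound _ (((ψ k).continuous.aestronglyMeasurable).sub hχm) (C := 2)
      (fun x => by
        calc ‖ψ k x - χ x‖ ≤ ‖ψ k x‖ + ‖χ x‖ := norm_sub_le _ _
        _ ≤ 1 + 1 := add_le_add (hψb k x) (hχb x)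
        _ = 2 := by norm_num) g
  have h := tendsto_eLpNorm_mul g (fun k => ⇑(ψ k)) χ
    (fun k => (ψ k).continuous.aestronglyMeasurable) hχm (fun k x => hψb k x) hχb
    (ae_restrict_of_ae hae)
  rw [tendsto_iff_norm_sub_tendsto_zero]
  have heq : ∀ k, ‖cmul σ (ψ k) g - hmem.toLp _‖
      = (eLpNorm (fun x => (ψ k x - χ x) * g x) 2
          ((haarAddCircle : Measure UnitAddCircle).restrict σ)).toReal := by
    intro k
    unfold cmul
    rw [toLp_mul_sub ⇑(ψ k) χ g
      (memℒp_mul_bound ⇑(ψ k) (ψ k).continuous.aestronglyMeasurable (ψ k).norm_coe_le_norm g)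
      hmem (hdiffmem k), Lp.norm_toLp]
  simp_rw [heq]
  have := (ENNReal.tendsto_toReal_iff (fun k => (hdiffmem k).eLpNorm_ne_top)
    (by simp : (0 : ENNReal) ≠ ⊤)).mpr h
  simpa using this

end Helper
section Key

open Filter

lemma haar_diff_null (σ₁ σ₂ : Set UnitAddCircle) (hσ₁ : MeasurableSet σ₁)
    (hσ₂ : MeasurableSet σ₂) (V : L2c σ₁ ≃L[ℂ] L2c σ₂)
    (hV : ∀ f : L2c σ₁, Msigma σ₂ (V f) = V (Msigma σ₁ f)) :
    (haarAddCircle : Measure UnitAddCircle) (σ₁ \ σ₂) = 0 := by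
  classical
  have hE : MeasurableSet (σ₁ \ σ₂) := hσ₁.diff hσ₂
  set χ : UnitAddCircle → ℂ := (σ₁ \ σ₂).indicator (fun _ => (1 : ℂ)) with hχdef
  have hχsm : StronglyMeasurable χ := stronglyMeasurable_const.indicator hE
  have hχb : ∀ x, ‖χ x‖ ≤ 1 := by
    intro x
    by_cases hx : x ∈ σ₁ \ σ₂ <;> simp [hχdef, Set.indicator_of_mem, Set.indicator_of_notMem, hx]
  have hχmem : MemLp χ 2 (haarAddCircle : Measure UnitAddCircle) :=
    memLp_indicator_const 2 hE (1 : ℂ) (Or.inr (measure_ne_top _ _))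
  -- dense approximation by continuous functions
  have hdense := ContinuousMap.toLp_denseRange ℂ (haarAddCircle : Measure UnitAddCircle) ℂ
    (by norm_num : (2 : ENNReal) ≠ ⊤)
  have hclos := hdense (hχmem.toLp χ)
  rw [mem_closure_iff_seq_limit] at hclos
  obtain ⟨u, hu_mem, hu_tend⟩ := hclos
  choose φ' hφ' using hu_mem
  have htend' : Tendsto (fun k => eLpNorm (⇑(φ' k) - χ) 2 (haarAddCircle : Measure UnitAddCircle))
      atTop (nhds 0) := by
    have heqf : (fun k => eLpNorm (⇑(φ' k) - χ) 2 (haarAddCircle : Measure UnitAddCircle))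
        = fun k => eLpNorm ⇑(u k - hχmem.toLp χ) 2 (haarAddCircle : Measure UnitAddCircle) := by
      funext k
      refine (eLpNorm_congr_ae ?_).symm
      have huk : ⇑(u k) =ᵐ[(haarAddCircle : Measure UnitAddCircle)] ⇑(φ' k) := by
        rw [← hφ' k]
        exact ContinuousMap.coeFn_toLp (E := ℂ) (𝕜 := ℂ) (p := 2) (μ := (haarAddCircle : Measure UnitAddCircle)) (φ' k)
      filter_upwards [Lp.coeFn_sub (u k) (hχmem.toLp χ), hχmem.coeFn_toLp, huk]
        with x e1 e2 e3
      rw [e1, Pi.sub_apply, e2, e3, Pi.sub_apply]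
    rw [heqf]
    have hnorm : Tendsto (fun k => ‖u k - hχmem.toLp χ‖) atTop (nhds 0) :=
      tendsto_iff_norm_sub_tendsto_zero.mp hu_tend
    simp_rw [Lp.norm_def] at hnorm
    exact (ENNReal.tendsto_toReal_iff (fun k => Lp.eLpNorm_ne_top _)
      (by simp : (0 : ENNReal) ≠ ⊤)).mp (by simpa using hnorm)
  have hmeasconv := tendstoInMeasure_of_tendsto_eLpNorm_of_ne_top two_ne_zero
    (by norm_num : (2 : ENNReal) ≠ ⊤) (fun k => (φ' k).continuous.aestronglyMeasurable)
    hχsm.aestronglyMeasurable htend'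
  obtain ⟨ns, hns_mono, hns_ae⟩ := hmeasconv.exists_seq_tendsto_ae
  -- clipped continuous approximants
  set ψ : ℕ → C(UnitAddCircle, ℂ) := fun k =>
    ⟨fun x => ((max 0 (min 1 ((φ' (ns k)) x).re) : ℝ) : ℂ),
      Complex.continuous_ofReal.comp
        (continuous_const.max (continuous_const.min
          (Complex.continuous_re.comp (φ' (ns k)).continuous)))⟩ with hψdef
  have hψb : ∀ k x, ‖ψ k x‖ ≤ 1 := by
    intro k x
    show ‖((max 0 (min 1 ((φ' (ns k)) x).re) : ℝ) : ℂ)‖ ≤ 1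
    rw [Complex.norm_real, Real.norm_eq_abs, abs_of_nonneg (le_max_left _ _)]
    exact max_le zero_le_one (min_le_left _ _)
  have hχre : ∀ x, ∃ t : ℝ, 0 ≤ t ∧ t ≤ 1 ∧ χ x = (t : ℂ) := by
    intro x
    by_cases hx : x ∈ σ₁ \ σ₂
    · exact ⟨1, zero_le_one, le_refl 1, by simp [hχdef, Set.indicator_of_mem hx]⟩
    · exact ⟨0, le_refl 0, zero_le_one, by simp [hχdef, Set.indicator_of_notMem hx]⟩
  have hkey : ∀ k x, ‖ψ k x - χ x‖ ≤ ‖(φ' (ns k)) x - χ x‖ := by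
    intro k x
    obtain ⟨t, ht0, ht1, ht⟩ := hχre x
    exact clip_norm_le ((φ' (ns k)) x) (χ x) t ht0 ht1 ht
  have hψae : ∀ᵐ x ∂(haarAddCircle : Measure UnitAddCircle),
      Tendsto (fun k => ψ k x) atTop (nhds (χ x)) := by
    filter_upwards [hns_ae] with x hx
    rw [tendsto_iff_norm_sub_tendsto_zero]
    refine squeeze_zero (fun k => norm_nonneg _) (fun k => hkey k x) ?_
    rw [← tendsto_iff_norm_sub_tendsto_zero]
    exact hx
  -- apply the intertwining on continuous multipliers and take limits
  set f₀ : L2c σ₁ := oneSigma σ₁ with hf₀def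
  set g₀ : L2c σ₂ := V f₀ with hg₀def
  have hχmem₁ : MemLp (fun x => χ x * f₀ x) 2
      ((haarAddCircle : Measure UnitAddCircle).restrict σ₁) :=
    memℒp_mul_bound χ hχsm.aestronglyMeasurable hχb f₀
  have hχmem₂ : MemLp (fun x => χ x * g₀ x) 2
      ((haarAddCircle : Measure UnitAddCircle).restrict σ₂) :=
    memℒp_mul_bound χ hχsm.aestronglyMeasurable hχb g₀
  have hlim₁ := tendsto_cmul_toLp σ₁ f₀ ψ χ hχsm.aestronglyMeasurable hψb hχb hψae hχmem₁
  have hlim₂ := tendsto_cmul_toLp σ₂ g₀ ψ χ hχsm.aestronglyMeasurable hψb hχb hψae hχmem₂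
  have hVlim : Tendsto (fun k => V (cmul σ₁ (ψ k) f₀)) atTop (nhds (V (hχmem₁.toLp _))) :=
    (V.continuous.tendsto _).comp hlim₁
  have hBs : (fun k => V (cmul σ₁ (ψ k) f₀)) = fun k => cmul σ₂ (ψ k) g₀ := by
    funext k
    exact intertwine_cmul σ₁ σ₂ V hV f₀ (ψ k)
  rw [hBs] at hVlim
  have hVeq : V (hχmem₁.toLp _) = hχmem₂.toLp _ := tendsto_nhds_unique hVlim hlim₂
  -- the right-hand side vanishes
  have hzero₂ : hχmem₂.toLp _ = 0 := by
    refine Lp.ext ?_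
    have hEnull : ((haarAddCircle : Measure UnitAddCircle).restrict σ₂) (σ₁ \ σ₂) = 0 := by
      rw [Measure.restrict_apply hE, Set.diff_inter_self, measure_empty]
    have hae0 : ∀ᵐ x ∂((haarAddCircle : Measure UnitAddCircle).restrict σ₂), x ∉ σ₁ \ σ₂ :=
      measure_eq_zero_iff_ae_notMem.mp hEnull
    filter_upwards [hχmem₂.coeFn_toLp,
      Lp.coeFn_zero ℂ 2 ((haarAddCircle : Measure UnitAddCircle).restrict σ₂), hae0]
      with x e1 e2 e3
    rw [e1, e2]
    simp [hχdef, Set.indicator_of_notMem e3]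
  have hzero₁ : hχmem₁.toLp _ = 0 := by
    apply V.injective
    rw [hVeq, hzero₂, map_zero]
  -- conclude
  have hf₀ae : ⇑f₀ =ᵐ[(haarAddCircle : Measure UnitAddCircle).restrict σ₁] fun _ => (1 : ℂ) :=
    MemLp.coeFn_toLp _
  have hcoe := hχmem₁.coeFn_toLp
  rw [hzero₁] at hcoe
  have hnm : ∀ᵐ x ∂((haarAddCircle : Measure UnitAddCircle).restrict σ₁), x ∉ σ₁ \ σ₂ := by
    filter_upwards [hcoe.symm,
      Lp.coeFn_zero ℂ 2 ((haarAddCircle : Measure UnitAddCircle).restrict σ₁), hf₀ae]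
      with x e1 e2 e3 hxE
    rw [e2, e3, mul_one] at e1
    rw [hχdef] at e1
    simp [Set.indicator_of_mem hxE] at e1
  have hnull := measure_eq_zero_iff_ae_notMem.mpr hnm
  rw [Measure.restrict_apply hE, Set.inter_eq_self_of_subset_left Set.diff_subset] at hnull
  exact hnull

end Key

/-- If the multiplication operators `M_{σ₁}` and `M_{σ₂}` are similar (via a bounded
bijective operator `V : L²(σ₁) → L²(σ₂)`), then the symmetric difference `σ₁ Δ σ₂`
has arc-length measure zero. -/
theorem measure_symmDiff_eq_zero_of_similar_multiplication
    (σ₁ σ₂ : Set UnitAddCircle) (hσ₁ : MeasurableSet σ₁) (hσ₂ : MeasurableSet σ₂)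
    (V : L2c σ₁ ≃L[ℂ] L2c σ₂)
    (hV : ∀ f : L2c σ₁, Msigma σ₂ (V f) = V (Msigma σ₁ f)) :
    (haarAddCircle : Measure UnitAddCircle) ((σ₁ \ σ₂) ∪ (σ₂ \ σ₁)) = 0 := by
  have hV' : ∀ g : L2c σ₂, Msigma σ₁ (V.symm g) = V.symm (Msigma σ₂ g) := by
    intro g
    have h := hV (V.symm g)
    rw [V.apply_symm_apply] at h
    have := congrArg V.symm h
    rw [V.symm_apply_apply] at this
    exact this.symm
  exact measure_union_null (haar_diff_null σ₁ σ₂ hσ₁ hσ₂ V hV)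
    (haar_diff_null σ₂ σ₁ hσ₂ hσ₁ V.symm hV')
end
end
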